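/- If R ⊂ SL_n(I_S)\SL_n(K_S) is relatively compact, then there exists ε > 0 such that ‖ξg‖ ≥ ε for every g ∈ SL_n(K_S) with [g] ∈ R and every nonzero ξ ∈ I_S^n. -/

import Mathlib

open MeasureTheory
open scoped BigOperators ENNReal NNReal

section SAdic

variable {Sr Sc Sf : Type} [Fintype Sr] [Fintype Sc] [Fintype Sf]

/-- The completion of a global field at a place in `S = Sr ⊕ Sc ⊕ Sf`:
`ℝ` at real places, `ℂ` at complex places, and a non-archimedean local field
`Kf v` at the finite places. -/
@[reducible] def PlaceField (Kf : Sf → Type) : Sr ⊕ Sc ⊕ Sf → Type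
  | .inl _ => ℝ
  | .inr (.inl _) => ℂ
  | .inr (.inr v) => Kf v

variable (Kf : Sf → Type) [∀ v, NontriviallyNormedField (Kf v)]

noncomputable instance : ∀ v : Sr ⊕ Sc ⊕ Sf, Field (PlaceField (Sr := Sr) (Sc := Sc) Kf v)
  | .inl _ => inferInstanceAs (Field ℝ)
  | .inr (.inl _) => inferInstanceAs (Field ℂ)
  | .inr (.inr v) => inferInstanceAs (Field (Kf v))

noncomputable instance : ∀ v : Sr ⊕ Sc ⊕ Sf, TopologicalSpace (PlaceField (Sr := Sr) (Sc := Sc) Kf v)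
  | .inl _ => inferInstanceAs (TopologicalSpace ℝ)
  | .inr (.inl _) => inferInstanceAs (TopologicalSpace ℂ)
  | .inr (.inr v) => inferInstanceAs (TopologicalSpace (Kf v))

variable [∀ v, MeasurableSpace (Kf v)]

instance : ∀ v : Sr ⊕ Sc ⊕ Sf, MeasurableSpace (PlaceField (Sr := Sr) (Sc := Sc) Kf v)
  | .inl _ => inferInstanceAs (MeasurableSpace ℝ)
  | .inr (.inl _) => inferInstanceAs (MeasurableSpace ℂ)
  | .inr (.inr v) => inferInstanceAs (MeasurableSpace (Kf v))

/-- The normalized norm on `K_v^n`: the Euclidean norm at real places, the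
*square* of the Euclidean norm at complex places, and the sup norm at
non-archimedean places. -/
noncomputable def placeNorm (n : ℕ) :
    ∀ v : Sr ⊕ Sc ⊕ Sf, (Fin n → PlaceField (Sr := Sr) (Sc := Sc) Kf v) → ℝ
  | .inl _ => fun x => Real.sqrt (∑ i, x i ^ 2)
  | .inr (.inl _) => fun x => ∑ i, ‖(x i : ℂ)‖ ^ 2
  | .inr (.inr _) => fun x => ⨆ i, ‖x i‖

/-- The norm `‖ξ‖ = max_{v∈S} ‖ξ_v‖_v` on `K_S^n`. -/
noncomputable def SNorm {n : ℕ}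
    (ξ : Fin n → ∀ v : Sr ⊕ Sc ⊕ Sf, PlaceField (Sr := Sr) (Sc := Sc) Kf v) : ℝ :=
  ⨆ v, placeNorm Kf n v (fun i => ξ i v)

/-- The content `cont(ξ) = ∏_{v∈S} ‖ξ_v‖_v` on `K_S^n`. -/
noncomputable def SCont {n : ℕ}
    (ξ : Fin n → ∀ v : Sr ⊕ Sc ⊕ Sf, PlaceField (Sr := Sr) (Sc := Sc) Kf v) : ℝ :=
  ∏ v, placeNorm Kf n v (fun i => ξ i v)

/-- The open ball `B_r(K_S^n)` of radius `r` centred at `0`. -/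
noncomputable def SBall (n : ℕ) (r : ℝ) :
    Set (Fin n → ∀ v : Sr ⊕ Sc ⊕ Sf, PlaceField (Sr := Sr) (Sc := Sc) Kf v) :=
  {ξ | SNorm Kf ξ < r}

variable (μf : ∀ v, Measure (Kf v))

/-- The normalized Haar measure on `K_v`: Lebesgue measure at real and complex
places, the given Haar measure `μf v` (normalized by `μf v (I_v) = 1`) at the
finite places. -/
noncomputable def placeMeasure :
    ∀ v : Sr ⊕ Sc ⊕ Sf, Measure (PlaceField (Sr := Sr) (Sc := Sc) Kf v)
  | .inl _ => volume
  | .inr (.inl _) => volume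
  | .inr (.inr v) => μf v

def placeMeasureSigmaFinite [∀ v, SigmaFinite (μf v)] :
    ∀ v : Sr ⊕ Sc ⊕ Sf, SigmaFinite (placeMeasure (Sr := Sr) (Sc := Sc) Kf μf v)
  | .inl _ => inferInstanceAs (SigmaFinite (volume : Measure ℝ))
  | .inr (.inl _) => inferInstanceAs (SigmaFinite (volume : Measure ℂ))
  | .inr (.inr v) => inferInstanceAs (SigmaFinite (μf v))

/-- The normalized Haar measure `vol` on `K_S^n`, the product of the
normalized measures at the places of `S`. -/
noncomputable def SVol [∀ v, SigmaFinite (μf v)] (n : ℕ) :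
    Measure (Fin n → ∀ v : Sr ⊕ Sc ⊕ Sf, PlaceField (Sr := Sr) (Sc := Sc) Kf v) :=
  haveI := placeMeasureSigmaFinite Kf μf
  Measure.pi fun _ => Measure.pi (placeMeasure Kf μf)


variable {K : Type} [Field K]

/-- `K`-linear independence (via the diagonal embedding of `K` in `K_S`) of a
family of vectors in `K_S^n`. -/
def KIndep (ι : ∀ v : Sr ⊕ Sc ⊕ Sf, K →+* PlaceField (Sr := Sr) (Sc := Sc) Kf v)
    {n m : ℕ} (f : Fin m → (Fin n → ∀ v, PlaceField (Sr := Sr) (Sc := Sc) Kf v)) : Prop :=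
  ∀ c : Fin m → K, (∑ i, (fun j v => ι v (c i) * f i j v)) = 0 → ∀ i, c i = 0

/-- `K_S`-linear independence of a family of vectors in `K_S^n`. -/
def KSIndep {n m : ℕ}
    (f : Fin m → (Fin n → ∀ v, PlaceField (Sr := Sr) (Sc := Sc) Kf v)) : Prop :=
  ∀ c : Fin m → (∀ v, PlaceField (Sr := Sr) (Sc := Sc) Kf v),
    (∑ i, (fun j v => c i v * f i j v)) = 0 → ∀ i, c i = 0

/-- The `m`-th successive minimum of `Γ ⊆ K_S^n`:
`ι_m = inf {r > 0 : dim_K span_K (B_r(K_S^n) ∩ Γ) ≥ m}`, expressed via the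
existence of `m` vectors of `Γ ∩ B_r` that are linearly independent over `K`. -/
noncomputable def sMinimum
    (ι : ∀ v : Sr ⊕ Sc ⊕ Sf, K →+* PlaceField (Sr := Sr) (Sc := Sc) Kf v)
    {n : ℕ} (Γ : Set (Fin n → ∀ v, PlaceField (Sr := Sr) (Sc := Sc) Kf v))
    (m : ℕ) : ℝ :=
  sInf {r : ℝ | 0 < r ∧ ∃ f : Fin m → (Fin n → ∀ v, PlaceField (Sr := Sr) (Sc := Sc) Kf v),
    (∀ i, f i ∈ Γ ∧ SNorm Kf (f i) < r) ∧ KIndep Kf ι f}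

/-- The normalized absolute value on `K_v`: the usual absolute value at real
places, the *square* of the usual absolute value at complex places, and the
norm at non-archimedean places. -/
noncomputable def placeAbs :
    ∀ v : Sr ⊕ Sc ⊕ Sf, PlaceField (Sr := Sr) (Sc := Sc) Kf v → ℝ
  | .inl _ => fun x => |x|
  | .inr (.inl _) => fun x => ‖(x : ℂ)‖ ^ 2
  | .inr (.inr _) => fun x => ‖x‖

/-- The covering radius of `Γ ⊆ K_S^n`:
`inf {r > 0 : B_r(K_S^n) + Γ = K_S^n}`. -/
noncomputable def covRadius {n : ℕ}
    (Γ : Set (Fin n → ∀ v, PlaceField (Sr := Sr) (Sc := Sc) Kf v)) : ℝ :=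
  sInf {r : ℝ | 0 < r ∧
    ∀ x : Fin n → ∀ v, PlaceField (Sr := Sr) (Sc := Sc) Kf v,
      ∃ γ ∈ Γ, SNorm Kf (x - γ) < r}

end SAdic


set_option linter.unusedSectionVars false
set_option linter.unusedVariables false

section MahlerAux

variable {Sr Sc Sf : Type} [Fintype Sr] [Fintype Sc] [Fintype Sf]
variable (Kf : Sf → Type) [∀ v, NontriviallyNormedField (Kf v)]

noncomputable instance instTRPlaceField :
    ∀ v : Sr ⊕ Sc ⊕ Sf, IsTopologicalRing (PlaceField (Sr := Sr) (Sc := Sc) Kf v)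
  | .inl _ => inferInstanceAs (IsTopologicalRing ℝ)
  | .inr (.inl _) => inferInstanceAs (IsTopologicalRing ℂ)
  | .inr (.inr v) => inferInstanceAs (IsTopologicalRing (Kf v))

lemma placeAbs_nonneg : ∀ (v : Sr ⊕ Sc ⊕ Sf) (x : PlaceField (Sr := Sr) (Sc := Sc) Kf v),
    0 ≤ placeAbs Kf v x
  | .inl _, x => abs_nonneg x
  | .inr (.inl _), x => pow_nonneg (norm_nonneg _) 2
  | .inr (.inr _), x => norm_nonneg x

lemma placeAbs_mul : ∀ (v : Sr ⊕ Sc ⊕ Sf) (x y : PlaceField (Sr := Sr) (Sc := Sc) Kf v),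
    placeAbs Kf v (x * y) = placeAbs Kf v x * placeAbs Kf v y
  | .inl _, x, y => abs_mul x y
  | .inr (.inl _), x, y => by
      show ‖(x * y : ℂ)‖ ^ 2 = ‖(x : ℂ)‖ ^ 2 * ‖(y : ℂ)‖ ^ 2
      rw [norm_mul, mul_pow]
  | .inr (.inr _), x, y => norm_mul x y

private lemma sum_le_card_mul_sum' {m : ℕ} (g : Fin m → ℝ) (hg : ∀ j, 0 ≤ g j) :
    ∑ j, g j ≤ m * ∑ j, g j := by
  rcases Nat.eq_zero_or_pos m with hm | hm
  · subst hm; simp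
  · exact le_mul_of_one_le_left (Finset.sum_nonneg fun j _ => hg j) (by exact_mod_cast hm)

lemma placeAbs_sum_le :
    ∀ (v : Sr ⊕ Sc ⊕ Sf) {m : ℕ} (x : Fin m → PlaceField (Sr := Sr) (Sc := Sc) Kf v),
    placeAbs Kf v (∑ j, x j) ≤ m * ∑ j, placeAbs Kf v (x j)
  | .inl _, m, x => by
      show |∑ j, x j| ≤ m * ∑ j, |x j|
      exact le_trans (Finset.abs_sum_le_sum_abs _ _)
        (sum_le_card_mul_sum' _ fun j => abs_nonneg _)
  | .inr (.inl _), m, x => by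
      show ‖(∑ j, x j : ℂ)‖ ^ 2 ≤ m * ∑ j, ‖(x j : ℂ)‖ ^ 2
      calc ‖(∑ j, x j : ℂ)‖ ^ 2
          ≤ (∑ j, ‖(x j : ℂ)‖) ^ 2 := by
            exact pow_le_pow_left₀ (norm_nonneg _) (norm_sum_le _ _) 2
        _ ≤ m * ∑ j, ‖(x j : ℂ)‖ ^ 2 := by
            simpa using sq_sum_le_card_mul_sum_sq (s := Finset.univ)
              (f := fun j => ‖(x j : ℂ)‖)
  | .inr (.inr _), m, x => by
      show ‖∑ j, x j‖ ≤ m * ∑ j, ‖x j‖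
      exact le_trans (norm_sum_le _ _) (sum_le_card_mul_sum' _ fun j => norm_nonneg _)

lemma placeAbs_comp_le :
    ∀ (v : Sr ⊕ Sc ⊕ Sf) {m : ℕ} (x : Fin m → PlaceField (Sr := Sr) (Sc := Sc) Kf v)
      (i : Fin m), placeAbs Kf v (x i) ≤ placeNorm Kf m v x
  | .inl _, m, x, i => by
      show |x i| ≤ Real.sqrt (∑ j, x j ^ 2)
      rw [← Real.sqrt_sq_eq_abs]
      refine Real.sqrt_le_sqrt ?_
      exact Finset.single_le_sum (f := fun j => (x j : ℝ) ^ 2) (s := Finset.univ)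
        (fun j _ => sq_nonneg ((x j : ℝ))) (Finset.mem_univ i)
  | .inr (.inl _), m, x, i => by
      show ‖(x i : ℂ)‖ ^ 2 ≤ ∑ j, ‖(x j : ℂ)‖ ^ 2
      exact Finset.single_le_sum (f := fun j => ‖(x j : ℂ)‖ ^ 2)
        (fun j _ => pow_nonneg (norm_nonneg _) 2) (Finset.mem_univ i)
  | .inr (.inr _), m, x, i => by
      show ‖x i‖ ≤ ⨆ j, ‖x j‖
      exact le_ciSup (f := fun j => ‖x j‖) (Set.finite_range _).bddAbove i

lemma placeNorm_nonneg :
    ∀ (v : Sr ⊕ Sc ⊕ Sf) {m : ℕ} (x : Fin m → PlaceField (Sr := Sr) (Sc := Sc) Kf v),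
    0 ≤ placeNorm Kf m v x
  | .inl _, m, x => Real.sqrt_nonneg _
  | .inr (.inl _), m, x =>
      Finset.sum_nonneg fun j _ => pow_nonneg (norm_nonneg _) 2
  | .inr (.inr _), m, x => Real.iSup_nonneg fun j => norm_nonneg _

lemma placeNorm_le_SNorm [Nonempty (Sr ⊕ Sc ⊕ Sf)] {n : ℕ}
    (ξ : Fin n → ∀ v : Sr ⊕ Sc ⊕ Sf, PlaceField (Sr := Sr) (Sc := Sc) Kf v)
    (v : Sr ⊕ Sc ⊕ Sf) :
    placeNorm Kf n v (fun i => ξ i v) ≤ SNorm Kf ξ :=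
  le_ciSup (f := fun v => placeNorm Kf n v (fun i => ξ i v))
    (Set.finite_range _).bddAbove v

lemma SNorm_nonneg [Nonempty (Sr ⊕ Sc ⊕ Sf)] {n : ℕ}
    (ξ : Fin n → ∀ v : Sr ⊕ Sc ⊕ Sf, PlaceField (Sr := Sr) (Sc := Sc) Kf v) :
    0 ≤ SNorm Kf ξ :=
  Real.iSup_nonneg fun v => placeNorm_nonneg Kf v _

lemma continuous_placeAbs :
    ∀ v : Sr ⊕ Sc ⊕ Sf, Continuous (placeAbs (Sr := Sr) (Sc := Sc) Kf v)
  | .inl _ => continuous_abs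
  | .inr (.inl _) => (continuous_norm (E := ℂ)).pow 2
  | .inr (.inr _) => continuous_norm

end MahlerAux

/-- Membership in `SL_n(I_S)`, diagonally embedded in `SL_n(K_S)`:
the matrix has entries coming from a matrix over the `S`-integers `R ⊆ K`
of determinant `1`. -/
def IsSLIS {Sr Sc Sf : Type} (Kf : Sf → Type) [∀ v, NontriviallyNormedField (Kf v)]
    {K : Type} [Field K]
    (ι : ∀ v : Sr ⊕ Sc ⊕ Sf, K →+* PlaceField (Sr := Sr) (Sc := Sc) Kf v)
    (R : Subring K) {n : ℕ}
    (g : Matrix (Fin n) (Fin n) (∀ v, PlaceField (Sr := Sr) (Sc := Sc) Kf v)) : Prop :=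
  ∃ A : Matrix (Fin n) (Fin n) K, (∀ i j, A i j ∈ R) ∧ A.det = 1 ∧
    ∀ i j, g i j = fun v => ι v (A i j)

/-- **Easy direction of the S-adic Mahler compactness criterion.**
`T ⊆ SL_n(K_S)` is a left-`SL_n(I_S)`-invariant set whose image in the
quotient `SL_n(I_S)\SL_n(K_S)` is relatively compact (it is contained in
`SL_n(I_S)·C` for a compact set `C`).  Then the nonzero vectors `ξ·g`, for
`ξ ∈ I_S^n ∖ {0}` and `g ∈ T`, are uniformly separated from `0`. -/
theorem mahler_criterion_necessity
    {Sr Sc Sf : Type} [Fintype Sr] [Fintype Sc] [Fintype Sf]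
    [Nonempty (Sr ⊕ Sc ⊕ Sf)]
    (Kf : Sf → Type) [∀ v, NontriviallyNormedField (Kf v)]
    [∀ v, IsUltrametricDist (Kf v)] [∀ v, CompleteSpace (Kf v)]
    [∀ v, MeasurableSpace (Kf v)] [∀ v, BorelSpace (Kf v)]
    [∀ v, LocallyCompactSpace (Kf v)]
    (μf : ∀ v, Measure (Kf v)) [∀ v, SigmaFinite (μf v)]
    [∀ v, (μf v).IsAddHaarMeasure]
    (hnormμ : ∀ v, μf v (Metric.closedBall 0 1) = 1)
    (q : Sf → ℕ) (hq : ∀ v, 1 < q v)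
    (hϖ : ∀ v, ∃ ϖ : Kf v, ‖ϖ‖ = ((q v : ℝ))⁻¹)
    (hval : ∀ v, ∀ x : Kf v, x ≠ 0 → ∃ k : ℤ, ‖x‖ = (q v : ℝ) ^ k)
    {K : Type} [Field K]
    (ι : ∀ v : Sr ⊕ Sc ⊕ Sf, K →+* PlaceField (Sr := Sr) (Sc := Sc) Kf v)
    (hdense : ∀ v, DenseRange (ι v))
    (R : Subring K)
    (hRdisc : ∃ ε > (0:ℝ), ∀ a ∈ R, a ≠ 0 →
      ε ≤ ⨆ v, placeAbs (Sr := Sr) (Sc := Sc) Kf v (ι v a))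
    (hRcc : ∃ B : ℝ, ∀ x : ∀ v, PlaceField (Sr := Sr) (Sc := Sc) Kf v,
      ∃ a ∈ R, (⨆ v, placeAbs (Sr := Sr) (Sc := Sc) Kf v (x v - ι v a)) ≤ B)
    {n : ℕ}
    (T : Set (Matrix.SpecialLinearGroup (Fin n) (∀ v, PlaceField (Sr := Sr) (Sc := Sc) Kf v)))
    (hTinv : ∀ g ∈ T, ∀ h : Matrix.SpecialLinearGroup (Fin n)
        (∀ v, PlaceField (Sr := Sr) (Sc := Sc) Kf v),
      IsSLIS Kf ι R (h : Matrix (Fin n) (Fin n) _) → h * g ∈ T)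
    (hTcpt : ∃ C : Set (Matrix (Fin n) (Fin n) (∀ v, PlaceField (Sr := Sr) (Sc := Sc) Kf v)),
      IsCompact C ∧ ∀ g ∈ T,
        ∃ h : Matrix.SpecialLinearGroup (Fin n) (∀ v, PlaceField (Sr := Sr) (Sc := Sc) Kf v),
          IsSLIS Kf ι R (h : Matrix (Fin n) (Fin n) _) ∧
          ((h * g : Matrix.SpecialLinearGroup (Fin n) _) : Matrix (Fin n) (Fin n) _) ∈ C) :
    ∃ ε > (0:ℝ), ∀ g ∈ T, ∀ ξ : Fin n → K, (∀ i, ξ i ∈ R) → ξ ≠ 0 →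
      ε ≤ SNorm (Sr := Sr) (Sc := Sc) Kf
        (Matrix.vecMul (fun i v => ι v (ξ i))
          (g : Matrix (Fin n) (Fin n) (∀ v, PlaceField (Sr := Sr) (Sc := Sc) Kf v))) := by
  classical
  obtain ⟨ε₀, hε₀, hdiscr⟩ := hRdisc
  obtain ⟨C, hC, hCT⟩ := hTcpt
  -- bound on the adjugates of matrices in C
  have hFc : Continuous (fun c : Matrix (Fin n) (Fin n)
      (∀ v, PlaceField (Sr := Sr) (Sc := Sc) Kf v) =>
      ∑ v : Sr ⊕ Sc ⊕ Sf, ∑ i : Fin n, ∑ j : Fin n,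
        placeAbs Kf v ((Matrix.adjugate c) i j v)) := by
    refine continuous_finset_sum _ fun v _ => continuous_finset_sum _ fun i _ =>
      continuous_finset_sum _ fun j _ => ?_
    exact (continuous_placeAbs Kf v).comp ((continuous_apply v).comp
      ((continuous_apply j).comp ((continuous_apply i).comp
        (continuous_id.matrix_adjugate))))
  obtain ⟨M0, hM0⟩ := (hC.image hFc).bddAbove
  set M : ℝ := max M0 1 with hMdef
  have hM1 : (1:ℝ) ≤ M := le_max_right _ _
  have hMpos : (0:ℝ) < M := lt_of_lt_of_le one_pos hM1
  have hMbound : ∀ c ∈ C, ∀ (v : Sr ⊕ Sc ⊕ Sf) (i j : Fin n),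
      placeAbs Kf v ((Matrix.adjugate c) i j v) ≤ M := by
    intro c hc v i j
    have t1 : placeAbs Kf v ((Matrix.adjugate c) i j v)
        ≤ ∑ j' : Fin n, placeAbs Kf v ((Matrix.adjugate c) i j' v) :=
      Finset.single_le_sum (f := fun j' => placeAbs Kf v ((Matrix.adjugate c) i j' v))
        (fun j' _ => placeAbs_nonneg Kf v _) (Finset.mem_univ j)
    have t2 : ∑ j' : Fin n, placeAbs Kf v ((Matrix.adjugate c) i j' v)
        ≤ ∑ i' : Fin n, ∑ j' : Fin n, placeAbs Kf v ((Matrix.adjugate c) i' j' v) :=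
      Finset.single_le_sum
        (f := fun i' => ∑ j' : Fin n, placeAbs Kf v ((Matrix.adjugate c) i' j' v))
        (fun i' _ => Finset.sum_nonneg fun j' _ => placeAbs_nonneg Kf v _)
        (Finset.mem_univ i)
    have t3 : ∑ i' : Fin n, ∑ j' : Fin n, placeAbs Kf v ((Matrix.adjugate c) i' j' v)
        ≤ ∑ v' : Sr ⊕ Sc ⊕ Sf, ∑ i' : Fin n, ∑ j' : Fin n,
          placeAbs Kf v' ((Matrix.adjugate c) i' j' v') :=
      Finset.single_le_sum
        (f := fun v' => ∑ i' : Fin n, ∑ j' : Fin n,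
          placeAbs Kf v' ((Matrix.adjugate c) i' j' v'))
        (fun v' _ => Finset.sum_nonneg fun i' _ =>
          Finset.sum_nonneg fun j' _ => placeAbs_nonneg Kf v' _)
        (Finset.mem_univ v)
    have t4 : ∑ v' : Sr ⊕ Sc ⊕ Sf, ∑ i' : Fin n, ∑ j' : Fin n,
        placeAbs Kf v' ((Matrix.adjugate c) i' j' v') ≤ M0 :=
      hM0 (Set.mem_image_of_mem _ hc)
    exact le_trans (le_trans t1 (le_trans t2 t3)) (le_trans t4 (le_max_left _ _))
  refine ⟨ε₀ / (((n : ℝ) ^ 2 + 1) * M), by positivity, ?_⟩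
  intro g hg ξ hξR hξ0
  obtain ⟨h, ⟨A, hAR, hAdet, hAeq⟩, hmem⟩ := hCT g hg
  have hBR : ∀ i j, A.adjugate i j ∈ R := by
    intro i j
    set A' : Matrix (Fin n) (Fin n) R := Matrix.of fun i j => (⟨A i j, hAR i j⟩ : R)
      with hA'def
    have hA' : A = R.subtype.mapMatrix A' := by
      ext i j; rfl
    rw [hA', ← RingHom.map_adjugate]
    exact SetLike.coe_mem _
  set η : Fin n → K := Matrix.vecMul ξ A.adjugate with hηdef
  have hηA : Matrix.vecMul η A = ξ := by
    rw [hηdef, Matrix.vecMul_vecMul, Matrix.adjugate_mul, hAdet, one_smul,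
      Matrix.vecMul_one]
  have hηR : ∀ i, η i ∈ R := by
    intro i
    simp only [hηdef, Matrix.vecMul, dotProduct]
    exact Subring.sum_mem R fun j _ => R.mul_mem (hξR j) (hBR j i)
  have hη0 : η ≠ 0 := by
    intro h0
    exact hξ0 (by rw [← hηA, h0, Matrix.zero_vecMul])
  obtain ⟨i₀, hi₀⟩ := Function.ne_iff.mp hη0
  set Φ : K →+* (∀ v, PlaceField (Sr := Sr) (Sc := Sc) Kf v) := Pi.ringHom ι with hΦdef
  have hcoeh : (h : Matrix (Fin n) (Fin n) (∀ v, PlaceField (Sr := Sr) (Sc := Sc) Kf v))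
      = A.map Φ := by
    funext i j
    rw [hAeq i j]
    rfl
  set c : Matrix (Fin n) (Fin n) (∀ v, PlaceField (Sr := Sr) (Sc := Sc) Kf v)
    := ((h * g : Matrix.SpecialLinearGroup (Fin n)
        (∀ v, PlaceField (Sr := Sr) (Sc := Sc) Kf v)) :
      Matrix (Fin n) (Fin n) (∀ v, PlaceField (Sr := Sr) (Sc := Sc) Kf v)) with hcdef
  have hdetc : c.det = 1 := Matrix.SpecialLinearGroup.det_coe (h * g)
  set ζ : Fin n → (∀ v, PlaceField (Sr := Sr) (Sc := Sc) Kf v)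
    := Matrix.vecMul (fun i => Φ (η i)) c with hζdef
  have key : Matrix.vecMul (fun i v => ι v (ξ i))
      (g : Matrix (Fin n) (Fin n) (∀ v, PlaceField (Sr := Sr) (Sc := Sc) Kf v)) = ζ := by
    rw [hζdef, hcdef, Matrix.SpecialLinearGroup.coe_mul, ← Matrix.vecMul_vecMul]
    have hv : (fun i v => ι v (ξ i)) = Matrix.vecMul (fun i => Φ (η i))
        (h : Matrix (Fin n) (Fin n) (∀ v, PlaceField (Sr := Sr) (Sc := Sc) Kf v)) := by
      funext j
      rw [hcoeh]
      calc (fun v => ι v (ξ j)) = Φ (ξ j) := rfl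
        _ = Φ ((Matrix.vecMul η A) j) := by rw [hηA]
        _ = Matrix.vecMul (Φ ∘ η) (A.map Φ) j := RingHom.map_vecMul Φ A η j
        _ = Matrix.vecMul (fun i => Φ (η i)) (A.map Φ) j := rfl
    rw [hv]
  have recov : (fun i => Φ (η i)) = Matrix.vecMul ζ c.adjugate := by
    rw [hζdef, Matrix.vecMul_vecMul, Matrix.mul_adjugate, hdetc, one_smul,
      Matrix.vecMul_one]
  rw [key]
  have hSnn : 0 ≤ SNorm Kf ζ := SNorm_nonneg Kf ζ
  have hεle : ε₀ ≤ SNorm Kf ζ * (((n : ℝ) ^ 2 + 1) * M) := by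
    refine le_trans (hdiscr (η i₀) (hηR i₀) hi₀) (Real.iSup_le (fun v => ?_) (by positivity))
    have e1 : ι v (η i₀) = (Matrix.vecMul ζ c.adjugate) i₀ v :=
      congrFun (congrFun recov i₀) v
    have e2 : (Matrix.vecMul ζ c.adjugate) i₀ v = ∑ j, ζ j v * c.adjugate j i₀ v := by
      simp [Matrix.vecMul, dotProduct, Finset.sum_apply, Pi.mul_apply]
    rw [e1, e2]
    have step1 : placeAbs Kf v (∑ j, ζ j v * c.adjugate j i₀ v)
        ≤ n * ∑ j, placeAbs Kf v (ζ j v * c.adjugate j i₀ v) := placeAbs_sum_le Kf v _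
    have step2 : ∑ j, placeAbs Kf v (ζ j v * c.adjugate j i₀ v)
        ≤ ∑ _j : Fin n, SNorm Kf ζ * M := by
      refine Finset.sum_le_sum fun j _ => ?_
      rw [placeAbs_mul]
      exact mul_le_mul
        (le_trans (placeAbs_comp_le Kf v (fun i => ζ i v) j) (placeNorm_le_SNorm Kf ζ v))
        (hMbound c hmem v j i₀) (placeAbs_nonneg Kf v _) hSnn
    have step3 : (n : ℝ) * ∑ _j : Fin n, SNorm Kf ζ * M
        = (n : ℝ) ^ 2 * (SNorm Kf ζ * M) := by
      simp [Finset.sum_const, Finset.card_univ]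
      ring
    have hSMnn : 0 ≤ SNorm Kf ζ * M := mul_nonneg hSnn hMpos.le
    calc placeAbs Kf v (∑ j, ζ j v * c.adjugate j i₀ v)
        ≤ n * ∑ j, placeAbs Kf v (ζ j v * c.adjugate j i₀ v) := step1
      _ ≤ n * ∑ _j : Fin n, SNorm Kf ζ * M := by
          exact mul_le_mul_of_nonneg_left step2 (Nat.cast_nonneg n)
      _ = (n : ℝ) ^ 2 * (SNorm Kf ζ * M) := step3
      _ ≤ ((n : ℝ) ^ 2 + 1) * (SNorm Kf ζ * M) := by nlinarith
      _ = SNorm Kf ζ * (((n : ℝ) ^ 2 + 1) * M) := by ring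
  rw [div_le_iff₀ (by positivity)]
  exact hεle
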